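/- For every α > 0, the integral ∫_{-1}^{1} G_α(x) dx is strictly greater than 1, where G_α(x) = (α/(1 - exp(-2α))) · exp(-α(x+1) - (x²-1)/2). -/

import Mathlib

/-- For every α > 0, ∫_{-1}^{1} G_α(x) dx > 1, where
G_α(x) = (α/(1 - exp(-2α))) · exp(-α(x+1) - (x²-1)/2). -/
theorem stmt_1 (α : ℝ) (hα : 0 < α) :
    1 < ∫ x in (-1 : ℝ)..1,
      (α / (1 - Real.exp (-2 * α))) * Real.exp (-α * (x + 1) - (x ^ 2 - 1) / 2) := by
  have h1 : (0:ℝ) < 1 - Real.exp (-2 * α) := by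
    have : Real.exp (-2 * α) < 1 := Real.exp_lt_one_iff.mpr (by linarith)
    linarith
  set c := α / (1 - Real.exp (-2 * α)) with hc
  have hcpos : 0 < c := div_pos hα h1
  have key : ∫ x in (-1:ℝ)..1, Real.exp (-α * (x + 1))
      = (1 - Real.exp (-2 * α)) / α := by
    have hd : ∀ x ∈ Set.uIcc (-1:ℝ) 1,
        HasDerivAt (fun x => -(1/α) * Real.exp (-α * (x + 1)))
          (Real.exp (-α * (x + 1))) x := by
      intro x _
      have h : HasDerivAt (fun x : ℝ => -α * (x + 1)) (-α) x := by
        simpa using ((hasDerivAt_id x).add_const 1).const_mul (-α)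
      have h2 := (h.exp).const_mul (-(1/α))
      convert h2 using 1
      · rfl
      · rfl
      field_simp
    have hint : IntervalIntegrable (fun x : ℝ => Real.exp (-α * (x + 1)))
        MeasureTheory.volume (-1) 1 := (by continuity :
        Continuous fun x : ℝ => Real.exp (-α * (x + 1))).intervalIntegrable _ _
    rw [intervalIntegral.integral_eq_sub_of_hasDerivAt hd hint]
    have h0 : (-α * ((-1:ℝ) + 1)) = 0 := by ring
    have h2 : (-α * ((1:ℝ) + 1)) = -2 * α := by ring
    rw [h0, h2, Real.exp_zero]
    field_simp
    ring
  have hJ : ∫ x in (-1:ℝ)..1, c * Real.exp (-α * (x + 1)) = 1 := by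
    rw [intervalIntegral.integral_const_mul, key, hc]
    field_simp [mul_comm]
    rw [div_self]
    have : -(α * 2) = -2 * α := by ring
    rw [this]
    positivity
  have hcont1 : Continuous fun x : ℝ => c * Real.exp (-α * (x + 1) - (x ^ 2 - 1) / 2) := by
    continuity
  have hcont2 : Continuous fun x : ℝ => c * Real.exp (-α * (x + 1)) := by continuity
  have hD : 0 < ∫ x in (-1:ℝ)..1,
      (c * Real.exp (-α * (x + 1) - (x ^ 2 - 1) / 2) - c * Real.exp (-α * (x + 1))) := by
    apply intervalIntegral.intervalIntegral_pos_of_pos_on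
    · exact (hcont1.sub hcont2).intervalIntegrable _ _
    · intro x hx
      have hx2 : x ^ 2 < 1 := by nlinarith [hx.1, hx.2]
      have hlt : Real.exp (-α * (x + 1)) < Real.exp (-α * (x + 1) - (x ^ 2 - 1) / 2) :=
        Real.exp_lt_exp.mpr (by linarith)
      have := mul_lt_mul_of_pos_left hlt hcpos
      linarith
    · norm_num
  rw [intervalIntegral.integral_sub (hcont1.intervalIntegrable _ _)
    (hcont2.intervalIntegrable _ _), hJ] at hD
  linarith
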